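/- arXiv:math/0607409 — 2 statements merged into one kernel-verified Lean document; each statement's English description precedes it below -/
import Mathlib

section
/- Let p ∈ {5, 7} and let k ≥ 4 be an even integer. For every θ ∈ [0, π], the complex number F*_{k,p,1}(θ) := e^{ikθ/2}·E*_{k,p}(e^{iθ}/√p) is real (its imaginary part is zero). -/
open Complex Real

/-- The Eisenstein series `E_k(z) = (1/2) Σ_{gcd(c,d)=1} (cz+d)^{-k}`. -/
noncomputable def Ek (k : ℕ) (z : ℂ) : ℂ :=
  (1 / 2) * ∑' q : ℤ × ℤ, if Int.gcd q.1 q.2 = 1 then ((q.1 : ℂ) * z + q.2) ^ (-(k : ℤ)) else 0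

lemma conj_Ek (k : ℕ) (z : ℂ) :
    (starRingEnd ℂ) (Ek k z) = Ek k (-((starRingEnd ℂ) z)) := by
  unfold Ek
  rw [map_mul, starRingEnd_apply, starRingEnd_apply, tsum_star]
  congr 1
  · simp
  rw [← (Equiv.prodCongr (Equiv.neg ℤ) (Equiv.refl ℤ)).tsum_eq]
  congr 1; ext q
  simp only [Equiv.prodCongr_apply, Equiv.coe_refl, Prod.map, Equiv.neg_apply, id]
  rw [Int.neg_gcd]
  by_cases h : Int.gcd q.1 q.2 = 1
  · simp only [h, if_true, star_zpow₀]
    congr 1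
    push_cast
    rw [star_add, star_mul]
    simp only [← starRingEnd_apply, map_neg, map_intCast]
    ring
  · simp [h]

lemma Ek_inv (k : ℕ) (z : ℂ) (hz : z ≠ 0) : Ek k (-1 / z) = z ^ k * Ek k z := by
  unfold Ek
  rw [mul_left_comm]
  congr 1
  rw [← tsum_mul_left]
  have he := ((Equiv.prodCongr (Equiv.refl ℤ) (Equiv.neg ℤ)).trans (Equiv.prodComm ℤ ℤ)).tsum_eq
    (fun q : ℤ × ℤ => if Int.gcd q.1 q.2 = 1 then ((q.1 : ℂ) * (-1 / z) + q.2) ^ (-(k : ℤ)) else 0)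
  rw [← he]
  refine tsum_congr fun q => ?_
  simp only [Equiv.trans_apply, Equiv.prodCongr_apply, Equiv.coe_refl, Prod.map,
    Equiv.neg_apply, id_eq, Equiv.prodComm_apply, Prod.swap_prod_mk, Prod.fst, Prod.snd]
  have hg : Int.gcd (-q.2) q.1 = Int.gcd q.1 q.2 := by rw [Int.neg_gcd, Int.gcd_comm]
  rw [hg, mul_ite, mul_zero]
  by_cases h : Int.gcd q.1 q.2 = 1
  · simp only [h, if_true]
    have h1 : ((-q.2 : ℤ) : ℂ) * (-1 / z) + ((q.1 : ℤ) : ℂ) = ((q.1 : ℂ) * z + q.2) / z := by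
      push_cast
      field_simp
      ring
    rw [h1, div_zpow, zpow_neg z, div_inv_eq_mul, zpow_natCast, mul_comm]
  · simp [h]

/-- The Eisenstein series `E*_{k,p}(z) = (p^{k/2} E_k(pz) + E_k(z)) / (p^{k/2}+1)`
associated with the Fricke group, where `p^{k/2}` is written as `(√p)^k`. -/
noncomputable def Estar (p k : ℕ) (z : ℂ) : ℂ :=
  (((Real.sqrt p) ^ k : ℝ) * Ek k (p * z) + Ek k z) / (((Real.sqrt p) ^ k : ℝ) + 1)

theorem Fstar1_is_real (p : ℕ) (hp : p = 5 ∨ p = 7) (k : ℕ) (hk : 4 ≤ k) (hke : Even k)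
    (θ : ℝ) (hθ : θ ∈ Set.Icc 0 Real.pi) :
    (Complex.exp (Complex.I * k * θ / 2) *
      Estar p k (Complex.exp (Complex.I * θ) / (Real.sqrt p : ℂ))).im = 0 := by
  have hp0 : (0:ℝ) ≤ (p:ℝ) := Nat.cast_nonneg p
  set s : ℝ := Real.sqrt p with hsdef
  have hs0 : 0 < s := Real.sqrt_pos.mpr (by rcases hp with h | h <;> simp [h])
  have hsC : (s:ℂ) ≠ 0 := by exact_mod_cast hs0.ne'
  have hsq : (s:ℂ) ^ 2 = (p:ℂ) := by
    rw [← Complex.ofReal_pow]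
    norm_cast
    rw [hsdef, Real.sq_sqrt hp0]
  set z : ℂ := Complex.exp (Complex.I * θ) / (s:ℂ) with hzdef
  have he0 : Complex.exp (Complex.I * θ) ≠ 0 := Complex.exp_ne_zero _
  have hz : z ≠ 0 := div_ne_zero he0 hsC
  have hpC : (p:ℂ) ≠ 0 := by rw [← hsq]; exact pow_ne_zero _ hsC
  have hpz : (p:ℂ) * z ≠ 0 := mul_ne_zero hpC hz
  have hcz : (starRingEnd ℂ) z = Complex.exp (-(Complex.I * θ)) / s := by
    rw [hzdef, map_div₀, ← Complex.exp_conj]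
    congr 2
    · simp [Complex.conj_I]
    · exact Complex.conj_ofReal s
  have h1 : -((starRingEnd ℂ) ((p:ℂ) * z)) = -1 / z := by
    rw [map_mul, hcz, map_natCast, hzdef, Complex.exp_neg, ← hsq]
    field_simp
  have h2 : -((starRingEnd ℂ) z) = -1 / ((p:ℂ) * z) := by
    rw [hcz, hzdef, Complex.exp_neg, ← hsq]
    field_simp
  rw [← Complex.conj_eq_iff_im]
  have hA : ((s ^ k : ℝ) : ℂ) = (s:ℂ) ^ k := by push_cast; ring
  have hz1 : Complex.exp (-(Complex.I * k * θ / 2)) * ((s:ℂ) ^ k * z ^ k) =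
      Complex.exp (Complex.I * k * θ / 2) := by
    rw [hzdef, div_pow, mul_comm ((s:ℂ)^k), div_mul_cancel₀ _ (pow_ne_zero _ hsC),
      ← Complex.exp_nat_mul, ← Complex.exp_add]
    congr 1
    ring
  have hz2 : Complex.exp (-(Complex.I * k * θ / 2)) * ((p:ℂ) * z) ^ k =
      Complex.exp (Complex.I * k * θ / 2) * (s:ℂ) ^ k := by
    have hpz' : (p:ℂ) * z = (s:ℂ) * Complex.exp (Complex.I * θ) := by
      rw [hzdef, ← hsq]
      field_simp
    rw [hpz', mul_pow, ← Complex.exp_nat_mul, mul_left_comm, ← Complex.exp_add,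
      show -(Complex.I * k * θ / 2) + k * (Complex.I * θ) = Complex.I * (k:ℂ) * θ / 2 by ring,
      mul_comm]
  have hconj : (starRingEnd ℂ) (Complex.exp (Complex.I * k * θ / 2)) =
      Complex.exp (-(Complex.I * k * θ / 2)) := by
    rw [← Complex.exp_conj]
    congr 1
    simp [Complex.conj_I, Complex.conj_ofReal, map_ofNat]
    ring
  unfold Estar
  rw [map_mul, map_div₀, map_add, map_add, map_mul, map_one, Complex.conj_ofReal,
    conj_Ek, conj_Ek, h1, h2, Ek_inv k z hz, Ek_inv k _ hpz, hconj, hA]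
  rw [mul_div_assoc' _ _ ((s:ℂ) ^ k + 1), mul_div_assoc' _ _ ((s:ℂ) ^ k + 1)]
  congr 1
  linear_combination (Ek k z) * hz1 + (Ek k ((p:ℂ) * z)) * hz2
end

section
/- Let k be a positive even integer with k not divisible by 6, and let f be a modular form of weight k for the Fricke group Γ₀*(7). Then f(−5/14 + (√3/14)·i) = 0. -/
open Complex Real UpperHalfPlane

theorem fricke7_vanishing_at_rho72 (k : ℤ) (hk : 0 < k) (hke : Even k)
    (hk6 : ¬ (6 ∣ k)) (f : ModularForm (CongruenceSubgroup.Gamma0 7) k)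
    (hfricke : ∀ z w : ℍ, (w : ℂ) = -1 / (7 * (z : ℂ)) →
      f w = (Real.sqrt 7 : ℂ) ^ k * (z : ℂ) ^ k * f z) :
    ∀ w : ℍ, (w : ℂ) = -(5/14) + (Real.sqrt 3 / 14) * Complex.I → f w = 0 := by
  intro w hw
  set s : ℂ := (Real.sqrt 3 : ℂ) with hs
  have hs2 : s ^ 2 = 3 := by
    rw [hs, ← Complex.ofReal_pow, Real.sq_sqrt (by norm_num : (3:ℝ) ≥ 0)]
    norm_num
  -- the elliptic element of Γ₀(7) fixing w
  let γ : Matrix.SpecialLinearGroup (Fin 2) ℤ := ⟨!![2,1;-7,-3], by decide⟩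
  have hγ : γ ∈ CongruenceSubgroup.Gamma0 7 := by
    rw [CongruenceSubgroup.Gamma0_mem]; decide
  -- the denominator value
  set ζ : ℂ := -(1/2) - (s/2) * Complex.I with hζ
  have hdenom : UpperHalfPlane.denom γ w = ζ := by
    rw [ModularGroup.denom_apply]
    show ((-7 : ℤ) : ℂ) * (w : ℂ) + ((-3 : ℤ) : ℂ) = ζ
    rw [hw]
    push_cast
    ring
  have hζne : ζ ≠ 0 := by
    rw [← hdenom]; exact UpperHalfPlane.denom_ne_zero _ _
  -- γ fixes w
  have hfix : γ • w = w := by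
    apply UpperHalfPlane.ext
    rw [UpperHalfPlane.specialLinearGroup_apply]
    show (((2:ℤ):ℝ) * (w:ℂ) + ((1:ℤ):ℝ)) / (((-7:ℤ):ℝ) * (w:ℂ) + ((-3:ℤ):ℝ)) = (w:ℂ)
    have hne : ((-7:ℤ):ℝ) * (w:ℂ) + ((-3:ℤ):ℝ) ≠ 0 := by
      have := hζne
      rw [← hdenom, ModularGroup.denom_apply] at this
      exact_mod_cast this
    rw [div_eq_iff hne, hw]
    push_cast
    have hI : Complex.I ^ 2 = -1 := Complex.I_sq
    linear_combination (s ^ 2 / 28) * hI - (1/28 : ℂ) * hs2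
  -- slash relation at the fixed point
  have heq := SlashInvariantForm.slash_action_eqn_SL'' f hγ w
  rw [hfix, hdenom] at heq
  -- ζ is a primitive cube root of unity
  have hζ3 : ζ ^ (3:ℕ) = 1 := by
    rw [hζ]
    have hI : Complex.I ^ 2 = -1 := Complex.I_sq
    linear_combination (-(1/8 : ℂ) * s ^ 3 * Complex.I - (3/8 : ℂ) * s ^ 2) * hI +
      ((1/8 : ℂ) * s * Complex.I + 3/8) * hs2
  have hsne : s ≠ 0 := by
    rw [hs]
    simp only [ne_eq, Complex.ofReal_eq_zero]
    positivity
  have hζ1 : ζ ≠ 1 := by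
    intro h
    rw [hζ] at h
    have him := congrArg Complex.im h
    simp [Complex.sub_im, Complex.mul_im, hs] at him
  have hζ2 : ζ ^ (2:ℕ) ≠ 1 := by
    intro h
    have h2 : ζ ^ (2:ℕ) = -(1/2) + (s/2) * Complex.I := by
      rw [hζ]
      have hI : Complex.I ^ 2 = -1 := Complex.I_sq
      linear_combination (s ^ 2 / 4) * hI - (1/4 : ℂ) * hs2
    rw [h2] at h
    have him := congrArg Complex.im h
    simp [Complex.add_im, Complex.mul_im, hs] at him
  -- 3 does not divide k
  have h3k : ¬ (3 ∣ k) := by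
    intro ⟨m, hm⟩
    obtain ⟨n, hn⟩ := hke
    apply hk6
    have : Even m := by
      rcases Int.even_or_odd m with h | h
      · exact h
      · exfalso
        obtain ⟨j, hj⟩ := h
        omega
    obtain ⟨p, hp⟩ := this
    exact ⟨p, by omega⟩
  -- ζ ^ k ≠ 1
  have hζk : ζ ^ k ≠ 1 := by
    have hdvd : k % 3 = 1 ∨ k % 3 = 2 := by omega
    have hkey : ζ ^ k = ζ ^ (k % 3) := by
      conv_lhs => rw [show k = 3 * (k / 3) + k % 3 by omega]
      rw [zpow_add₀ hζne, zpow_mul]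
      norm_num
      rw [hζ3, one_zpow, one_mul]
    rw [hkey]
    rcases hdvd with h | h
    · rw [h, zpow_one]; exact hζ1
    · rw [h, show (2:ℤ) = ((2:ℕ):ℤ) by norm_num, zpow_natCast]; exact hζ2
  -- conclude
  have hmul : (1 - ζ ^ k) * f w = 0 := by linear_combination heq
  rcases mul_eq_zero.mp hmul with h | h
  · exact absurd (sub_eq_zero.mp h).symm hζk
  · exact h
end
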